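/- Let n ≥ 2, (c_0, c_1, c_2) ∈ Z_4 × Z_{2n} × Z_{2n²}, and suppose x, x' ∈ C_n(c_0,c_1,c_2) and d_1, e_1, d_2, e_2 ∈ {1,…,n} with d_1 ≠ e_1, d_2 ≠ e_2, and E(x, d_1, e_1) = E(x', d_2, e_2). If either e_1 < d_1 ≤ d_2 < e_2 or e_2 < d_1 ≤ d_2 < e_1 (Case (iii)), then x = x'. -/

import Mathlib

/-- The bit of `x` at 1-based position `p` (junk value `0` out of range). -/
def getBit {n : ℕ} (x : Fin n → Fin 2) (p : ℕ) : Fin 2 :=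
  if h : p - 1 < n then x ⟨p - 1, h⟩ else 0

/-- Hamming weight of a binary sequence. -/
def wt {n : ℕ} (x : Fin n → Fin 2) : ℕ := ∑ i, (x i : ℕ)

/-- The `j`-th order VT syndrome `f_j(x) = Σ_{i=1}^n (Σ_{ℓ=1}^i ℓ^{j-1}) x_i`. -/
def vtSyn {n : ℕ} (j : ℕ) (x : Fin n → Fin 2) : ℕ :=
  ∑ i : Fin n, (∑ l ∈ Finset.Icc 1 ((i : ℕ) + 1), l ^ (j - 1)) * (x i : ℕ)

/-- Substitute the symbol at 1-based position `e` of `x` with its complement. -/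
def substAt {n : ℕ} (x : Fin n → Fin 2) (e : ℕ) : Fin n → Fin 2 :=
  fun i => if (i : ℕ) + 1 = e then 1 - x i else x i

/-- Delete the symbol at 1-based position `d` of `x`. -/
def delAt {n : ℕ} (x : Fin n → Fin 2) (d : ℕ) : Fin (n - 1) → Fin 2 :=
  fun i => if (i : ℕ) + 1 < d then getBit x ((i : ℕ) + 1) else getBit x ((i : ℕ) + 2)

/-- `E(x,d,e)`: delete the symbol at position `d` and substitute the symbol at
position `e` of `x` (positions are 1-based, taken in the original `x`). -/
def delSub {n : ℕ} (x : Fin n → Fin 2) (d e : ℕ) : Fin (n - 1) → Fin 2 :=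
  delAt (substAt x e) d

/-- The single-deletion single-substitution error ball `B_{1,1}(x)`. -/
def ball {n : ℕ} (x : Fin n → Fin 2) : Set (Fin (n - 1) → Fin 2) :=
  {y | (∃ d ∈ Finset.Icc 1 n, y = delAt x d) ∨
       ∃ d ∈ Finset.Icc 1 n, ∃ e ∈ Finset.Icc 1 n, d ≠ e ∧ y = delSub x d e}

/-- The code `C_n(c0,c1,c2)`. -/
def codeC (n : ℕ) (c0 c1 c2 : ℕ) : Finset (Fin n → Fin 2) :=
  Finset.univ.filter fun x =>
    x ≠ (fun _ => 0) ∧ x ≠ (fun _ => 1) ∧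
    wt x % 4 = c0 ∧ vtSyn 1 x % (2 * n) = c1 ∧ vtSyn 2 x % (2 * n ^ 2) = c2

/-- `u_i = Σ_{ℓ=i}^n x_ℓ − Σ_{ℓ=i}^n x'_ℓ` (1-based positions, value in `ℤ`). -/
def uSeq {n : ℕ} (x x' : Fin n → Fin 2) (i : ℕ) : ℤ :=
  (∑ l ∈ Finset.Icc i n, ((getBit x l : ℕ) : ℤ)) -
    ∑ l ∈ Finset.Icc i n, ((getBit x' l : ℕ) : ℤ)


namespace Stmt12Aux

lemma getBit_substAt {n : ℕ} (x : Fin n → Fin 2) (e p : ℕ) (hp : 1 ≤ p) (hpn : p ≤ n) :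
    getBit (substAt x e) p = if p = e then 1 - getBit x p else getBit x p := by
  have h : p - 1 < n := by omega
  have h1 : p - 1 + 1 = p := by omega
  simp only [getBit, substAt, dif_pos h, h1]

lemma delSub_eval {n : ℕ} (x : Fin n → Fin 2) (d e k : ℕ) (hk : k < n - 1) :
    delSub x d e ⟨k, hk⟩ =
      if k + 1 < d then (if k + 1 = e then 1 - getBit x (k+1) else getBit x (k+1))
      else (if k + 2 = e then 1 - getBit x (k+2) else getBit x (k+2)) := by
  have h1 : k + 1 ≤ n := by omega
  have h2 : k + 2 ≤ n := by omega
  simp only [delSub, delAt]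
  rw [getBit_substAt x e (k+1) (by omega) h1, getBit_substAt x e (k+2) (by omega) h2]

lemma sum_pos_eq {n : ℕ} (y : Fin n → Fin 2) (w : ℕ → ℤ) :
    ∑ p ∈ Finset.Icc 1 n, w p * ((getBit y p : ℕ) : ℤ)
      = ∑ i : Fin n, w ((i : ℕ) + 1) * ((y i : ℕ) : ℤ) := by
  rw [← Finset.Ico_add_one_right_eq_Icc, Finset.sum_Ico_eq_sum_range]
  simp only [Nat.add_sub_cancel]
  rw [← Fin.sum_univ_eq_sum_range (fun j => w (1 + j) * ((getBit y (1 + j) : ℕ) : ℤ)) n]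
  refine Finset.sum_congr rfl fun i _ => ?_
  have hv : (i : ℕ) < n := i.isLt
  simp only [getBit, add_comm 1 (i : ℕ), Nat.add_sub_cancel, dif_pos hv, Fin.eta]

lemma wt_cast {n : ℕ} (y : Fin n → Fin 2) :
    (wt y : ℤ) = ∑ p ∈ Finset.Icc 1 n, ((getBit y p : ℕ) : ℤ) := by
  have h := sum_pos_eq y (fun _ => (1 : ℤ))
  simp only [one_mul] at h
  rw [h, wt]
  push_cast
  rfl

lemma vt_cast {n : ℕ} (y : Fin n → Fin 2) :
    (vtSyn 1 y : ℤ) = ∑ p ∈ Finset.Icc 1 n, (p : ℤ) * ((getBit y p : ℕ) : ℤ) := by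
  have hv : vtSyn 1 y = ∑ i : Fin n, ((i : ℕ) + 1) * (y i : ℕ) := by
    refine Finset.sum_congr rfl fun i _ => ?_
    simp [Nat.card_Icc]
  rw [sum_pos_eq y (fun p => (p : ℤ)), hv]
  push_cast
  rfl

lemma split_sum {n : ℕ} (x x' : Fin n → Fin 2) (d1 d2 eL eH : ℕ)
    (hb : 1 ≤ eL) (hLd : eL < d1) (hdd : d1 ≤ d2) (hdH : d2 < eH) (hHn : eH ≤ n)
    (hlow : ∀ q, 1 ≤ q → q < d1 → q ≠ eL → getBit x q = getBit x' q)
    (hmid : ∀ q, d1 ≤ q → q < d2 → getBit x (q+1) = getBit x' q)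
    (hhigh : ∀ q, d2 < q → q ≤ n → q ≠ eH → getBit x q = getBit x' q)
    (w : ℕ → ℤ) :
    ∑ p ∈ Finset.Icc 1 n, w p * (((getBit x p : ℕ) : ℤ) - ((getBit x' p : ℕ) : ℤ))
      = w eL * (((getBit x eL : ℕ) : ℤ) - ((getBit x' eL : ℕ) : ℤ))
        + (w d1 * ((getBit x d1 : ℕ) : ℤ)
            + (∑ p ∈ Finset.Icc (d1+1) d2, (w p - w (p-1)) * ((getBit x p : ℕ) : ℤ))
            - w d2 * ((getBit x' d2 : ℕ) : ℤ))
        + w eH * (((getBit x eH : ℕ) : ℤ) - ((getBit x' eH : ℕ) : ℤ)) := by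
  set F : ℕ → ℤ := fun p => w p * (((getBit x p : ℕ) : ℤ) - ((getBit x' p : ℕ) : ℤ)) with hF
  have h0 : Finset.Icc 1 n = Finset.Ioc 0 n := by
    ext p; simp only [Finset.mem_Icc, Finset.mem_Ioc]; omega
  have hsplit : ∑ p ∈ Finset.Ioc 0 n, F p
      = ∑ p ∈ Finset.Ioc 0 (d1-1), F p + ∑ p ∈ Finset.Ioc (d1-1) d2, F p
        + ∑ p ∈ Finset.Ioc d2 n, F p := by
    rw [Finset.sum_Ioc_consecutive F (show (0:ℕ) ≤ d1-1 by omega) (show d1-1 ≤ d2 by omega),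
      Finset.sum_Ioc_consecutive F (show (0:ℕ) ≤ d2 by omega) (show d2 ≤ n by omega)]
  have hlowS : ∑ p ∈ Finset.Ioc 0 (d1-1), F p
      = w eL * (((getBit x eL : ℕ) : ℤ) - ((getBit x' eL : ℕ) : ℤ)) := by
    refine Finset.sum_eq_single_of_mem eL (Finset.mem_Ioc.mpr ⟨by omega, by omega⟩)
      fun p hp hne => ?_
    have hp' := Finset.mem_Ioc.mp hp
    rw [hF]
    simp only [hlow p (by omega) (by omega) hne, sub_self, mul_zero]
  have hhighS : ∑ p ∈ Finset.Ioc d2 n, F p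
      = w eH * (((getBit x eH : ℕ) : ℤ) - ((getBit x' eH : ℕ) : ℤ)) := by
    refine Finset.sum_eq_single_of_mem eH (Finset.mem_Ioc.mpr ⟨by omega, by omega⟩)
      fun p hp hne => ?_
    have hp' := Finset.mem_Ioc.mp hp
    rw [hF]
    simp only [hhigh p (by omega) (by omega) hne, sub_self, mul_zero]
  have hIcc : Finset.Ioc (d1-1) d2 = Finset.Icc d1 d2 := by
    ext p; simp only [Finset.mem_Ioc, Finset.mem_Icc]; omega
  have hIoc2 : Finset.Ioc d1 d2 = Finset.Icc (d1+1) d2 := by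
    ext p; simp only [Finset.mem_Ioc, Finset.mem_Icc]; omega
  have hx1 : ∑ p ∈ Finset.Icc d1 d2, w p * ((getBit x p : ℕ) : ℤ)
      = w d1 * ((getBit x d1 : ℕ) : ℤ)
        + ∑ p ∈ Finset.Icc (d1+1) d2, w p * ((getBit x p : ℕ) : ℤ) := by
    rw [Finset.Icc_eq_cons_Ioc hdd, Finset.sum_cons, hIoc2]
  have hx2 : ∑ p ∈ Finset.Icc d1 d2, w p * ((getBit x' p : ℕ) : ℤ)
      = (∑ p ∈ Finset.Icc (d1+1) d2, w (p-1) * ((getBit x p : ℕ) : ℤ))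
        + w d2 * ((getBit x' d2 : ℕ) : ℤ) := by
    rw [Finset.Icc_eq_cons_Ico hdd, Finset.sum_cons, add_comm]
    congr 1
    have hcg : ∀ p ∈ Finset.Ico d1 d2, w p * ((getBit x' p : ℕ) : ℤ)
        = w ((p+1)-1) * ((getBit x (p+1) : ℕ) : ℤ) := by
      intro p hp
      have hp' := Finset.mem_Ico.mp hp
      rw [← hmid p (by omega) (by omega)]
      simp
    rw [Finset.sum_congr rfl hcg,
      Finset.sum_Ico_add' (fun q => w (q-1) * ((getBit x q : ℕ) : ℤ)) d1 d2 1,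
      Finset.Ico_add_one_right_eq_Icc]
  have hmidS : ∑ p ∈ Finset.Ioc (d1-1) d2, F p
      = w d1 * ((getBit x d1 : ℕ) : ℤ)
        + (∑ p ∈ Finset.Icc (d1+1) d2, (w p - w (p-1)) * ((getBit x p : ℕ) : ℤ))
        - w d2 * ((getBit x' d2 : ℕ) : ℤ) := by
    rw [hIcc, hF]
    simp only [mul_sub]
    rw [Finset.sum_sub_distrib, hx1, hx2]
    simp only [sub_mul]
    rw [Finset.sum_sub_distrib]
    ring
  rw [h0, hsplit, hlowS, hmidS, hhighS]

lemma arith_contra (n d1 d2 eL eH : ℕ) (A A' T T' C C' a : ℤ)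
    (hb : 1 ≤ eL) (hLd : eL < d1) (hdd : d1 ≤ d2) (hdH : d2 < eH) (hHn : eH ≤ n)
    (hA : 0 ≤ A) (hA1 : A ≤ 1) (hA'0 : 0 ≤ A') (hA1' : A' ≤ 1)
    (hT : 0 ≤ T) (hT1 : T ≤ 1) (hT'0 : 0 ≤ T') (hT1' : T' ≤ 1)
    (hC : 0 ≤ C) (hC1 : C ≤ 1) (hC'0 : 0 ≤ C') (hC1' : C' ≤ 1)
    (hfL : A + A' = 1) (hfH : C + C' = 1)
    (ha : 0 ≤ a) (ha2 : a ≤ (d2 : ℤ) - (d1 : ℤ))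
    (h4 : (4 : ℤ) ∣ (A - A' + (T - T') + (C - C')))
    (h2n : ((2 * n : ℕ) : ℤ) ∣
      ((eL : ℤ) * (A - A') + ((d1 : ℤ) * T + a - (d2 : ℤ) * T') + (eH : ℤ) * (C - C'))) :
    False := by
  obtain ⟨k, hk⟩ := h4
  have hcases : (A = 0 ∧ A' = 1 ∧ C = 1 ∧ C' = 0 ∧ T' = T) ∨
      (A = 1 ∧ A' = 0 ∧ C = 0 ∧ C' = 1 ∧ T' = T) := by omega
  have hT01 : T = 0 ∨ T = 1 := by omega
  rcases hcases with ⟨rfl, rfl, rfl, rfl, rfl⟩ | ⟨rfl, rfl, rfl, rfl, rfl⟩ <;>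
    rcases hT01 with rfl | rfl <;>
  · push_cast at h2n
    ring_nf at h2n
    have h0 := Int.eq_zero_of_abs_lt_dvd h2n (by rw [abs_lt]; constructor <;> omega)
    omega

lemma bit01 (v : Fin 2) : 0 ≤ ((v : ℕ) : ℤ) ∧ ((v : ℕ) : ℤ) ≤ 1 := by
  have := v.isLt; omega

lemma flip1 : ∀ u v : Fin 2, 1 - u = v → ((u : ℕ) : ℤ) + ((v : ℕ) : ℤ) = 1 := by decide
lemma flip2 : ∀ u v : Fin 2, u = 1 - v → ((u : ℕ) : ℤ) + ((v : ℕ) : ℤ) = 1 := by decide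

lemma key {n : ℕ} (x x' : Fin n → Fin 2) (d1 d2 eL eH : ℕ)
    (hb : 1 ≤ eL) (hLd : eL < d1) (hdd : d1 ≤ d2) (hdH : d2 < eH) (hHn : eH ≤ n)
    (hlow : ∀ q, 1 ≤ q → q < d1 → q ≠ eL → getBit x q = getBit x' q)
    (hfL : ((getBit x eL : ℕ) : ℤ) + ((getBit x' eL : ℕ) : ℤ) = 1)
    (hmid : ∀ q, d1 ≤ q → q < d2 → getBit x (q+1) = getBit x' q)
    (hhigh : ∀ q, d2 < q → q ≤ n → q ≠ eH → getBit x q = getBit x' q)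
    (hfH : ((getBit x eH : ℕ) : ℤ) + ((getBit x' eH : ℕ) : ℤ) = 1)
    (hwt : wt x % 4 = wt x' % 4)
    (hf1 : vtSyn 1 x % (2*n) = vtSyn 1 x' % (2*n)) : False := by
  have e1' := split_sum x x' d1 d2 eL eH hb hLd hdd hdH hHn hlow hmid hhigh (fun _ => (1:ℤ))
  have e2' := split_sum x x' d1 d2 eL eH hb hLd hdd hdH hHn hlow hmid hhigh (fun p => (p:ℤ))
  simp only [one_mul, sub_self, zero_mul, Finset.sum_const_zero, add_zero] at e1'
  have hco : ∀ p ∈ Finset.Icc (d1+1) d2,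
      (((p:ℕ):ℤ) - ((p-1 : ℕ):ℤ)) * ((getBit x p : ℕ) : ℤ) = ((getBit x p : ℕ) : ℤ) := by
    intro p hp
    have hp' := Finset.mem_Icc.mp hp
    have h1 : ((p-1 : ℕ):ℤ) = (p:ℤ) - 1 := by omega
    rw [h1]; ring
  rw [Finset.sum_congr rfl hco] at e2'
  -- divisibility facts
  have h4 : (4:ℤ) ∣ ((wt x : ℤ) - (wt x' : ℤ)) := by
    have h := (Nat.modEq_iff_dvd (n := 4)).mp hwt
    have h' := dvd_neg.mpr h
    rw [neg_sub] at h'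
    exact_mod_cast h'
  have h2n : ((2*n : ℕ):ℤ) ∣ ((vtSyn 1 x : ℤ) - (vtSyn 1 x' : ℤ)) := by
    have h := (Nat.modEq_iff_dvd (n := 2*n)).mp hf1
    have h' := dvd_neg.mpr h
    rw [neg_sub] at h'
    exact h'
  have hwsum : (wt x : ℤ) - (wt x' : ℤ)
      = (((getBit x eL : ℕ):ℤ) - ((getBit x' eL : ℕ):ℤ))
        + ((((getBit x d1 : ℕ):ℤ)) - (((getBit x' d2 : ℕ):ℤ)))
        + (((getBit x eH : ℕ):ℤ) - ((getBit x' eH : ℕ):ℤ)) := by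
    rw [wt_cast, wt_cast, ← Finset.sum_sub_distrib, e1']
  have hvsum : (vtSyn 1 x : ℤ) - (vtSyn 1 x' : ℤ)
      = (eL:ℤ) * (((getBit x eL : ℕ):ℤ) - ((getBit x' eL : ℕ):ℤ))
        + ((d1:ℤ) * ((getBit x d1 : ℕ):ℤ)
            + (∑ p ∈ Finset.Icc (d1+1) d2, ((getBit x p : ℕ):ℤ))
            - (d2:ℤ) * ((getBit x' d2 : ℕ):ℤ))
        + (eH:ℤ) * (((getBit x eH : ℕ):ℤ) - ((getBit x' eH : ℕ):ℤ)) := by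
    rw [vt_cast, vt_cast, ← Finset.sum_sub_distrib]
    rw [show (∑ p ∈ Finset.Icc 1 n, ((p:ℤ) * ((getBit x p : ℕ):ℤ) - (p:ℤ) * ((getBit x' p : ℕ):ℤ)))
        = ∑ p ∈ Finset.Icc 1 n, (p:ℤ) * (((getBit x p : ℕ):ℤ) - ((getBit x' p : ℕ):ℤ)) by
      refine Finset.sum_congr rfl fun p _ => by ring]
    rw [e2']
  rw [hwsum] at h4
  rw [hvsum] at h2n
  have ha : 0 ≤ ∑ p ∈ Finset.Icc (d1+1) d2, ((getBit x p : ℕ):ℤ) :=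
    Finset.sum_nonneg fun p _ => (bit01 _).1
  have ha2 : (∑ p ∈ Finset.Icc (d1+1) d2, ((getBit x p : ℕ):ℤ)) ≤ (d2:ℤ) - (d1:ℤ) := by
    calc (∑ p ∈ Finset.Icc (d1+1) d2, ((getBit x p : ℕ):ℤ))
        ≤ ∑ p ∈ Finset.Icc (d1+1) d2, (1:ℤ) := Finset.sum_le_sum fun p _ => (bit01 _).2
      _ = ((Finset.Icc (d1+1) d2).card : ℤ) := by simp
      _ ≤ (d2:ℤ) - (d1:ℤ) := by
          rw [Nat.card_Icc]
          omega
  exact arith_contra n d1 d2 eL eH _ _ _ _ _ _ _ hb hLd hdd hdH hHn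
    (bit01 _).1 (bit01 _).2 (bit01 _).1 (bit01 _).2
    (bit01 _).1 (bit01 _).2 (bit01 _).1 (bit01 _).2
    (bit01 _).1 (bit01 _).2 (bit01 _).1 (bit01 _).2
    hfL hfH ha ha2
    (by exact_mod_cast h4) h2n

end Stmt12Aux

/-- Case (iii): e1 < d1 ≤ d2 < e2 or e2 < d1 ≤ d2 < e1 implies x = x'. -/
theorem stmt12 (n : ℕ) (hn : 2 ≤ n) (c0 c1 c2 : ℕ)
    (hc0 : c0 < 4) (hc1 : c1 < 2 * n) (hc2 : c2 < 2 * n ^ 2)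
    (x x' : Fin n → Fin 2)
    (hx : x ∈ codeC n c0 c1 c2) (hx' : x' ∈ codeC n c0 c1 c2)
    (d1 e1 d2 e2 : ℕ)
    (hd1 : d1 ∈ Finset.Icc 1 n) (he1 : e1 ∈ Finset.Icc 1 n)
    (hd2 : d2 ∈ Finset.Icc 1 n) (he2 : e2 ∈ Finset.Icc 1 n)
    (h1 : d1 ≠ e1) (h2 : d2 ≠ e2)
    (hE : delSub x d1 e1 = delSub x' d2 e2)
    (hcase : (e1 < d1 ∧ d1 ≤ d2 ∧ d2 < e2) ∨ (e2 < d1 ∧ d1 ≤ d2 ∧ d2 < e1)) :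
    x = x' := by
  obtain ⟨hd1a, hd1b⟩ := Finset.mem_Icc.mp hd1
  obtain ⟨he1a, he1b⟩ := Finset.mem_Icc.mp he1
  obtain ⟨hd2a, hd2b⟩ := Finset.mem_Icc.mp hd2
  obtain ⟨he2a, he2b⟩ := Finset.mem_Icc.mp he2
  simp only [codeC, Finset.mem_filter, Finset.mem_univ, true_and] at hx hx'
  obtain ⟨-, -, hw, hf, -⟩ := hx
  obtain ⟨-, -, hw', hf', -⟩ := hx'
  have hwt : wt x % 4 = wt x' % 4 := hw.trans hw'.symm
  have hf1eq : vtSyn 1 x % (2*n) = vtSyn 1 x' % (2*n) := hf.trans hf'.symm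
  exfalso
  rcases hcase with ⟨ca, cb, cc⟩ | ⟨ca, cb, cc⟩
  · -- e1 < d1 ≤ d2 < e2
    refine Stmt12Aux.key x x' d1 d2 e1 e2 he1a ca cb cc he2b ?_ ?_ ?_ ?_ ?_ hwt hf1eq
    · intro q hq1 hq2 hq3
      have hk : q - 1 < n - 1 := by omega
      have h := congrFun hE ⟨q-1, hk⟩
      rw [Stmt12Aux.delSub_eval x d1 e1 (q-1) hk, Stmt12Aux.delSub_eval x' d2 e2 (q-1) hk] at h
      rw [show q - 1 + 1 = q by omega] at h
      rw [if_pos (show q < d1 by omega), if_pos (show q < d2 by omega),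
        if_neg hq3, if_neg (show q ≠ e2 by omega)] at h
      exact h
    · have hk : e1 - 1 < n - 1 := by omega
      have h := congrFun hE ⟨e1-1, hk⟩
      rw [Stmt12Aux.delSub_eval x d1 e1 (e1-1) hk, Stmt12Aux.delSub_eval x' d2 e2 (e1-1) hk] at h
      rw [show e1 - 1 + 1 = e1 by omega] at h
      rw [if_pos (show e1 < d1 by omega), if_pos (show e1 < d2 by omega),
        if_pos (show e1 = e1 by rfl), if_neg (show e1 ≠ e2 by omega)] at h
      exact Stmt12Aux.flip1 _ _ h
    · intro q hq1 hq2
      have hk : q - 1 < n - 1 := by omega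
      have h := congrFun hE ⟨q-1, hk⟩
      rw [Stmt12Aux.delSub_eval x d1 e1 (q-1) hk, Stmt12Aux.delSub_eval x' d2 e2 (q-1) hk] at h
      rw [show q - 1 + 1 = q by omega, show q - 1 + 2 = q + 1 by omega] at h
      rw [if_neg (show ¬ q < d1 by omega), if_neg (show q + 1 ≠ e1 by omega),
        if_pos (show q < d2 by omega), if_neg (show q ≠ e2 by omega)] at h
      exact h
    · intro q hq1 hq2 hq3
      have hk : q - 2 < n - 1 := by omega
      have h := congrFun hE ⟨q-2, hk⟩
      rw [Stmt12Aux.delSub_eval x d1 e1 (q-2) hk, Stmt12Aux.delSub_eval x' d2 e2 (q-2) hk] at h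
      rw [show q - 2 + 1 = q - 1 by omega, show q - 2 + 2 = q by omega] at h
      rw [if_neg (show ¬ q - 1 < d1 by omega), if_neg (show q ≠ e1 by omega),
        if_neg (show ¬ q - 1 < d2 by omega), if_neg hq3] at h
      exact h
    · have hk : e2 - 2 < n - 1 := by omega
      have h := congrFun hE ⟨e2-2, hk⟩
      rw [Stmt12Aux.delSub_eval x d1 e1 (e2-2) hk, Stmt12Aux.delSub_eval x' d2 e2 (e2-2) hk] at h
      rw [show e2 - 2 + 1 = e2 - 1 by omega, show e2 - 2 + 2 = e2 by omega] at h
      rw [if_neg (show ¬ e2 - 1 < d1 by omega), if_neg (show e2 ≠ e1 by omega),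
        if_neg (show ¬ e2 - 1 < d2 by omega), if_pos (show e2 = e2 by rfl)] at h
      exact Stmt12Aux.flip2 _ _ h
  · -- e2 < d1 ≤ d2 < e1
    refine Stmt12Aux.key x x' d1 d2 e2 e1 he2a ca cb cc he1b ?_ ?_ ?_ ?_ ?_ hwt hf1eq
    · intro q hq1 hq2 hq3
      have hk : q - 1 < n - 1 := by omega
      have h := congrFun hE ⟨q-1, hk⟩
      rw [Stmt12Aux.delSub_eval x d1 e1 (q-1) hk, Stmt12Aux.delSub_eval x' d2 e2 (q-1) hk] at h
      rw [show q - 1 + 1 = q by omega] at h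
      rw [if_pos (show q < d1 by omega), if_pos (show q < d2 by omega),
        if_neg (show q ≠ e1 by omega), if_neg hq3] at h
      exact h
    · have hk : e2 - 1 < n - 1 := by omega
      have h := congrFun hE ⟨e2-1, hk⟩
      rw [Stmt12Aux.delSub_eval x d1 e1 (e2-1) hk, Stmt12Aux.delSub_eval x' d2 e2 (e2-1) hk] at h
      rw [show e2 - 1 + 1 = e2 by omega] at h
      rw [if_pos (show e2 < d1 by omega), if_pos (show e2 < d2 by omega),
        if_neg (show e2 ≠ e1 by omega), if_pos (show e2 = e2 by rfl)] at h
      exact Stmt12Aux.flip2 _ _ h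
    · intro q hq1 hq2
      have hk : q - 1 < n - 1 := by omega
      have h := congrFun hE ⟨q-1, hk⟩
      rw [Stmt12Aux.delSub_eval x d1 e1 (q-1) hk, Stmt12Aux.delSub_eval x' d2 e2 (q-1) hk] at h
      rw [show q - 1 + 1 = q by omega, show q - 1 + 2 = q + 1 by omega] at h
      rw [if_neg (show ¬ q < d1 by omega), if_neg (show q + 1 ≠ e1 by omega),
        if_pos (show q < d2 by omega), if_neg (show q ≠ e2 by omega)] at h
      exact h
    · intro q hq1 hq2 hq3
      have hk : q - 2 < n - 1 := by omega
      have h := congrFun hE ⟨q-2, hk⟩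
      rw [Stmt12Aux.delSub_eval x d1 e1 (q-2) hk, Stmt12Aux.delSub_eval x' d2 e2 (q-2) hk] at h
      rw [show q - 2 + 1 = q - 1 by omega, show q - 2 + 2 = q by omega] at h
      rw [if_neg (show ¬ q - 1 < d1 by omega), if_neg hq3,
        if_neg (show ¬ q - 1 < d2 by omega), if_neg (show q ≠ e2 by omega)] at h
      exact h
    · have hk : e1 - 2 < n - 1 := by omega
      have h := congrFun hE ⟨e1-2, hk⟩
      rw [Stmt12Aux.delSub_eval x d1 e1 (e1-2) hk, Stmt12Aux.delSub_eval x' d2 e2 (e1-2) hk] at h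
      rw [show e1 - 2 + 1 = e1 - 1 by omega, show e1 - 2 + 2 = e1 by omega] at h
      rw [if_neg (show ¬ e1 - 1 < d1 by omega), if_pos (show e1 = e1 by rfl),
        if_neg (show ¬ e1 - 1 < d2 by omega), if_neg (show e1 ≠ e2 by omega)] at h
      exact Stmt12Aux.flip1 _ _ h
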